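/- Fix a positive integer N, thresholds η ∈ [0,1] and β ∈ [0,1], and let k_β be a natural number satisfying C(k_β; N, η) ≤ β. Let p ∈ [0,1] and let μ_p denote the N-fold product of the Bernoulli(p) measure on {0,1}. If μ_p of the event { (x_1,…,x_N) : ∑_{i=1}^N x_i ≤ k_β } is strictly greater than β, then p ≤ η. -/

import Mathlib

open MeasureTheory

/-- The binomial cumulative distribution function
`C(k; N, p) = ∑_{ℓ=0}^{k} (N choose ℓ) p^ℓ (1-p)^{N-ℓ}`. -/
noncomputable def binomCDF (N : ℕ) (p : ℝ) (k : ℕ) : ℝ :=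
  ∑ ℓ ∈ Finset.range (k + 1), (N.choose ℓ : ℝ) * p ^ ℓ * (1 - p) ^ (N - ℓ)

/-- The `N`-fold product of the Bernoulli(`p`) measure on `{0,1}` (here `Bool`). -/
noncomputable def bernoulliPi (N : ℕ) (p : ℝ) (hp : p ∈ Set.Icc (0 : ℝ) 1) :
    Measure (Fin N → Bool) :=
  Measure.pi fun _ =>
    (PMF.bernoulli (Real.toNNReal p) (Real.toNNReal_le_one.mpr hp.2)).toMeasure

lemma binomCDF_hasDerivAt (N k : ℕ) (p : ℝ) :
    HasDerivAt (fun q : ℝ => binomCDF N q k)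
      (0 - (N.choose (k+1) : ℝ) * (k+1) * p ^ k * (1-p) ^ (N - (k+1))) p := by
  set A : ℕ → ℝ := fun j => (N.choose j : ℝ) * j * p ^ (j - 1) * (1 - p) ^ (N - j) with hA
  have hterm : ∀ ℓ ∈ Finset.range (k+1),
      HasDerivAt (fun q : ℝ => (N.choose ℓ : ℝ) * q ^ ℓ * (1 - q) ^ (N - ℓ)) (A ℓ - A (ℓ+1)) p := by
    intro ℓ _
    have h1 : HasDerivAt (fun q : ℝ => 1 - q) (-1) p := (hasDerivAt_id p).const_sub 1
    have h2 : HasDerivAt (fun q : ℝ => (1 - q) ^ (N - ℓ))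
        ((N - ℓ : ℕ) * (1 - p) ^ (N - ℓ - 1) * (-1)) p := by
      exact h1.fun_pow (N - ℓ)
    have h3 := ((hasDerivAt_pow ℓ p).const_mul (N.choose ℓ : ℝ)).mul h2
    refine h3.congr_deriv (Eq.symm ?_)
    have hcast : ((N.choose (ℓ+1) : ℝ)) * ((ℓ : ℝ) + 1) = (N.choose ℓ : ℝ) * ((N - ℓ : ℕ) : ℝ) := by
      exact_mod_cast Nat.choose_succ_right_eq N ℓ
    simp only [hA]
    push_cast
    rw [show N - (ℓ+1) = N - ℓ - 1 from (Nat.sub_sub N ℓ 1).symm]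
    linear_combination (-(p ^ ℓ * (1-p) ^ (N - ℓ - 1))) * hcast
  have hs := HasDerivAt.sum hterm
  rw [Finset.sum_range_sub'] at hs
  have : (fun q : ℝ => binomCDF N q k)
      = fun q : ℝ => ∑ ℓ ∈ Finset.range (k + 1), (N.choose ℓ : ℝ) * q ^ ℓ * (1 - q) ^ (N - ℓ) := by
    funext q; rfl
  rw [this]
  simpa [hA, Nat.add_sub_cancel, mul_assoc, Finset.sum_fn] using hs

lemma binomCDF_anti (N k : ℕ) : AntitoneOn (fun p : ℝ => binomCDF N p k) (Set.Icc 0 1) := by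
  apply antitoneOn_of_deriv_nonpos (convex_Icc 0 1)
  · exact fun x _ => ((binomCDF_hasDerivAt N k x).continuousAt).continuousWithinAt
  · exact fun x _ => ((binomCDF_hasDerivAt N k x).differentiableAt).differentiableWithinAt
  · intro x hx
    rw [interior_Icc] at hx
    rw [(binomCDF_hasDerivAt N k x).deriv]
    have hx1 : (0:ℝ) ≤ 1 - x := by linarith [hx.2]
    have h1 : (0:ℝ) ≤ (N.choose (k+1) : ℝ) * (k+1) * x ^ k * (1-x) ^ (N - (k+1)) :=
      mul_nonneg (mul_nonneg (mul_nonneg (Nat.cast_nonneg _) (by positivity))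
        (pow_nonneg hx.1.le k)) (pow_nonneg hx1 _)
    linarith

lemma card_trues (N ℓ : ℕ) :
    (Finset.univ.filter fun x : Fin N → Bool =>
        (Finset.univ.filter fun i => x i = true).card = ℓ).card = N.choose ℓ := by
  classical
  rw [show N.choose ℓ = (Finset.powersetCard ℓ (Finset.univ : Finset (Fin N))).card by
    rw [Finset.card_powersetCard, Finset.card_univ, Fintype.card_fin]]
  · apply Finset.card_nbij (fun x => Finset.univ.filter fun i => x i = true)
    · intro x hx
      simp only [Finset.coe_filter, Set.mem_setOf_eq, Finset.mem_univ, true_and] at hx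
      simp [Finset.mem_powersetCard, hx]
    · intro x _ y _ hxy
      have hxy' : (Finset.univ.filter fun j => x j = true)
          = Finset.univ.filter fun j => y j = true := hxy
      funext i
      have : (i ∈ Finset.univ.filter fun j => x j = true)
          ↔ (i ∈ Finset.univ.filter fun j => y j = true) := by rw [hxy']
      simp only [Finset.mem_filter, Finset.mem_univ, true_and] at this
      cases hx : x i <;> cases hy : y i <;> simp_all
    · intro s hs
      have hs' : s.card = ℓ := (Finset.mem_powersetCard.mp (Finset.mem_coe.mp hs)).2
      have hback : (Finset.univ.filter fun i => (decide (i ∈ s)) = true) = s := by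
        ext i; simp
      refine ⟨fun i => decide (i ∈ s), ?_, hback⟩
      simp only [Finset.mem_coe, Finset.mem_filter, Finset.mem_univ, true_and]
      rw [hback]; exact hs'

lemma bernoulliPi_singleton (N : ℕ) (p : ℝ) (hp : p ∈ Set.Icc (0:ℝ) 1) (x : Fin N → Bool) :
    bernoulliPi N p hp {x}
      = ENNReal.ofReal p ^ (Finset.univ.filter fun i => x i = true).card
        * ENNReal.ofReal (1-p) ^ (N - (Finset.univ.filter fun i => x i = true).card) := by
  classical
  rw [bernoulliPi, ← Set.univ_pi_singleton, Measure.pi_pi]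
  have hb : ∀ b : Bool,
      (PMF.bernoulli (Real.toNNReal p) (Real.toNNReal_le_one.mpr hp.2)).toMeasure {b}
        = if b = true then ENNReal.ofReal p else ENNReal.ofReal (1-p) := by
    intro b
    rw [PMF.toMeasure_apply_singleton _ b (measurableSet_singleton b), PMF.bernoulli_apply]
    simp only [Bool.cond_eq_ite, apply_ite ((↑) : NNReal → ENNReal), ENNReal.coe_sub, ENNReal.coe_one]
    rw [show ((Real.toNNReal p : NNReal) : ENNReal) = ENNReal.ofReal p from rfl]
    cases b
    · simp [ENNReal.ofReal_sub 1 hp.1]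
    · simp
  simp_rw [hb]
  rw [Finset.prod_ite, Finset.prod_const, Finset.prod_const]
  congr 1
  have := Finset.card_filter_add_card_filter_not
    (s := (Finset.univ : Finset (Fin N))) (p := fun i => x i = true)
  rw [Finset.card_univ, Fintype.card_fin] at this
  congr 1
  omega

lemma measure_coe_finset {α : Type*} [MeasurableSpace α] [MeasurableSingletonClass α]
    (μ : Measure α) (s : Finset α) : μ ↑s = ∑ x ∈ s, μ {x} := by
  have := MeasureTheory.sum_measure_preimage_singleton (μ := μ) s (f := (id : α → α))
    (fun b _ => by simpa using measurableSet_singleton b)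
  simpa using this.symm

lemma bernoulliPi_event (N k : ℕ) (p : ℝ) (hp : p ∈ Set.Icc (0:ℝ) 1) :
    bernoulliPi N p hp {x | Nat.card {i : Fin N // x i = true} ≤ k}
      = ENNReal.ofReal (binomCDF N p k) := by
  classical
  set t : (Fin N → Bool) → ℕ := fun x => (Finset.univ.filter fun i => x i = true).card with ht
  have hset : {x : Fin N → Bool | Nat.card {i : Fin N // x i = true} ≤ k}
      = ↑(Finset.univ.filter fun x => t x ≤ k) := by
    ext x
    simp [ht, Nat.card_eq_fintype_card, Fintype.card_subtype]
  rw [hset, measure_coe_finset]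
  have hsing : ∀ x : Fin N → Bool, bernoulliPi N p hp {x}
      = ENNReal.ofReal p ^ t x * ENNReal.ofReal (1-p) ^ (N - t x) :=
    fun x => bernoulliPi_singleton N p hp x
  simp_rw [hsing]
  rw [← Finset.sum_fiberwise_of_maps_to (g := t) (t := Finset.range (k+1))
    (fun x hx => by simpa [Finset.mem_range, Nat.lt_succ_iff] using (Finset.mem_filter.mp hx).2)]
  have h1p : (0:ℝ) ≤ 1 - p := by linarith [hp.2]
  rw [binomCDF, ENNReal.ofReal_sum_of_nonneg (fun ℓ _ =>
    mul_nonneg (mul_nonneg (Nat.cast_nonneg _) (pow_nonneg hp.1 _)) (pow_nonneg h1p _))]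
  apply Finset.sum_congr rfl
  intro ℓ hℓ
  have hfil : (Finset.univ.filter fun x => t x ≤ k).filter (fun x => t x = ℓ)
      = Finset.univ.filter fun x => t x = ℓ := by
    rw [Finset.filter_filter]
    apply Finset.filter_congr
    intro x _
    simp only [Finset.mem_range, Nat.lt_succ_iff] at hℓ
    constructor
    · exact fun h => h.2
    · exact fun h => ⟨h ▸ hℓ, h⟩
  rw [hfil]
  have hconst : ∀ x ∈ Finset.univ.filter fun x => t x = ℓ,
      ENNReal.ofReal p ^ t x * ENNReal.ofReal (1-p) ^ (N - t x)
        = ENNReal.ofReal p ^ ℓ * ENNReal.ofReal (1-p) ^ (N - ℓ) := by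
    intro x hx
    have : t x = ℓ := (Finset.mem_filter.mp hx).2
    rw [this]
  rw [Finset.sum_congr rfl hconst, Finset.sum_const, card_trues N ℓ, nsmul_eq_mul]
  rw [ENNReal.ofReal_mul (mul_nonneg (Nat.cast_nonneg _) (pow_nonneg hp.1 _)),
    ENNReal.ofReal_mul (Nat.cast_nonneg _),
    ENNReal.ofReal_pow hp.1, ENNReal.ofReal_pow h1p, ENNReal.ofReal_natCast, mul_assoc]

theorem stmt_1 (N : ℕ) (hN : 0 < N) (η β : ℝ)
    (hη : η ∈ Set.Icc (0 : ℝ) 1) (hβ : β ∈ Set.Icc (0 : ℝ) 1)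
    (kβ : ℕ) (hkβ : binomCDF N η kβ ≤ β)
    (p : ℝ) (hp : p ∈ Set.Icc (0 : ℝ) 1)
    (h : ENNReal.ofReal β <
      bernoulliPi N p hp {x | Nat.card {i : Fin N // x i = true} ≤ kβ}) :
    p ≤ η := by
  by_contra hcon
  push_neg at hcon
  rw [bernoulliPi_event N kβ p hp] at h
  have hβp : β < binomCDF N p kβ := by
    by_contra h2
    push_neg at h2
    exact absurd h (not_lt.mpr (ENNReal.ofReal_le_ofReal h2))
  have hmono := binomCDF_anti N kβ hη hp hcon.le
  simp only at hmono
  linarith
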